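/- If ω is a finite positive Borel measure on [0,1) satisfying ∫₀ᵗ ((1-t)/(1-s))^γ dω(s) ≤ C·ω̂(t) for all t ∈ [0,1) (for some C, γ > 0), then there is a constant C' such that ∫₀ᵗ s^{1/(1-t)} dω(s) ≤ C'·ω̂(t) for all t ∈ [0,1). -/

import Mathlib

open MeasureTheory Set

lemma aux_ptwise {t s γ : ℝ} (hγ : 0 < γ) (hs : 0 ≤ s) (hst : s < t) (ht : t < 1) :
    s ^ (1 / (1 - t)) ≤ (Nat.factorial (Nat.ceil γ) : ℝ) * ((1 - t) / (1 - s)) ^ γ := by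
  set n := Nat.ceil γ with hn
  have ht' : (0:ℝ) < 1 - t := by linarith
  have hs' : (0:ℝ) < 1 - s := by linarith
  set x := (1 - s) / (1 - t) with hxdef
  have hx1 : 1 ≤ x := (one_le_div ht').mpr (by linarith)
  have hx0 : 0 < x := lt_of_lt_of_le one_pos hx1
  have hcpos : 0 < 1 / (1 - t) := by positivity
  have stepA : s ^ (1 / (1 - t)) ≤ Real.exp (-x) := by
    rcases eq_or_lt_of_le hs with hs0 | hs0
    · rw [← hs0, Real.zero_rpow (ne_of_gt hcpos)]
      exact (Real.exp_pos _).le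
    · rw [Real.rpow_def_of_pos hs0]
      apply Real.exp_le_exp.mpr
      have hlog : Real.log s ≤ s - 1 := Real.log_le_sub_one_of_pos hs0
      have h1 : Real.log s * (1 / (1 - t)) ≤ (s - 1) * (1 / (1 - t)) :=
        mul_le_mul_of_nonneg_right hlog hcpos.le
      have h2 : (s - 1) * (1 / (1 - t)) = -x := by rw [hxdef]; field_simp; ring
      linarith
  have stepB : Real.exp (-x) ≤ (Nat.factorial n : ℝ) / x ^ n := by
    have h1 : x ^ n / (Nat.factorial n : ℝ) ≤ Real.exp x := Real.pow_div_factorial_le_exp _ hx0.le n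
    rw [div_le_iff₀ (by positivity : (0:ℝ) < (Nat.factorial n : ℝ))] at h1
    rw [Real.exp_neg, ← one_div, div_le_div_iff₀ (Real.exp_pos x) (by positivity)]
    nlinarith [Real.exp_pos x]
  have stepC : (Nat.factorial n : ℝ) / x ^ n ≤ (Nat.factorial n : ℝ) * ((1 - t) / (1 - s)) ^ γ := by
    have hxg : x ^ γ ≤ x ^ (n : ℝ) := Real.rpow_le_rpow_of_exponent_le hx1 (Nat.le_ceil γ)
    have hxn : x ^ (n : ℝ) = x ^ n := Real.rpow_natCast x n
    have hinv : ((1 - t) / (1 - s)) ^ γ = (x ^ γ)⁻¹ := by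
      have hxinv : (1 - t) / (1 - s) = x⁻¹ := by rw [hxdef, inv_div]
      rw [hxinv, Real.inv_rpow hx0.le]
    rw [hinv, div_eq_mul_inv]
    apply mul_le_mul_of_nonneg_left _ (by positivity)
    rw [inv_le_inv₀ (by positivity) (by positivity : (0:ℝ) < x ^ γ)]
    rw [← hxn]; exact hxg
  linarith

theorem stmt_4 (ω : Measure ℝ) [IsFiniteMeasure ω] (C γ : ℝ) (hC : 0 < C) (hγ : 0 < γ)
    (h : ∀ t : ℝ, 0 ≤ t → t < 1 →
      (∫ s in Ico (0 : ℝ) t, ((1 - t) / (1 - s)) ^ γ ∂ω) ≤ C * (ω (Ico t 1)).toReal) :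
    ∃ C' : ℝ, 0 < C' ∧ ∀ t : ℝ, 0 ≤ t → t < 1 →
      (∫ s in Ico (0 : ℝ) t, s ^ (1 / (1 - t)) ∂ω) ≤ C' * (ω (Ico t 1)).toReal := by
  set n := Nat.ceil γ with hn
  refine ⟨(Nat.factorial n : ℝ) * C, by positivity, fun t ht0 ht1 => ?_⟩
  have ht' : (0:ℝ) < 1 - t := by linarith
  have hmeasf : Measurable fun s : ℝ => s ^ (1 / (1 - t)) := measurable_id.pow measurable_const
  have hmeasg : Measurable fun s : ℝ => ((1 - t) / (1 - s)) ^ γ :=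
    (measurable_const.div (measurable_const.sub measurable_id)).pow measurable_const
  have hintf : IntegrableOn (fun s : ℝ => s ^ (1 / (1 - t))) (Ico 0 t) ω := by
    apply Integrable.mono' (integrable_const 1) hmeasf.aestronglyMeasurable
    filter_upwards [ae_restrict_mem measurableSet_Ico] with s hsmem
    rcases hsmem with ⟨hs0, hst⟩
    rw [Real.norm_eq_abs, abs_of_nonneg (Real.rpow_nonneg hs0 _)]
    exact Real.rpow_le_one hs0 (by linarith) (by positivity)
  have hintg : IntegrableOn (fun s : ℝ => ((1 - t) / (1 - s)) ^ γ) (Ico 0 t) ω := by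
    apply Integrable.mono' (integrable_const 1) hmeasg.aestronglyMeasurable
    filter_upwards [ae_restrict_mem measurableSet_Ico] with s hsmem
    rcases hsmem with ⟨hs0, hst⟩
    have hs' : (0:ℝ) < 1 - s := by linarith
    have hd : (1 - t) / (1 - s) ≤ 1 := (div_le_one hs').mpr (by linarith)
    have hd0 : 0 ≤ (1 - t) / (1 - s) := by positivity
    rw [Real.norm_eq_abs, abs_of_nonneg (Real.rpow_nonneg hd0 _)]
    exact Real.rpow_le_one hd0 hd hγ.le
  calc (∫ s in Ico (0 : ℝ) t, s ^ (1 / (1 - t)) ∂ω)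
      ≤ ∫ s in Ico (0 : ℝ) t, (Nat.factorial n : ℝ) * ((1 - t) / (1 - s)) ^ γ ∂ω := by
        apply setIntegral_mono_on hintf (hintg.const_mul _) measurableSet_Ico
        intro s hsmem
        exact aux_ptwise hγ hsmem.1 hsmem.2 ht1
    _ = (Nat.factorial n : ℝ) * ∫ s in Ico (0 : ℝ) t, ((1 - t) / (1 - s)) ^ γ ∂ω := integral_const_mul _ _
    _ ≤ (Nat.factorial n : ℝ) * (C * (ω (Ico t 1)).toReal) :=
        mul_le_mul_of_nonneg_left (h t ht0 ht1) (by positivity)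
    _ = (Nat.factorial n : ℝ) * C * (ω (Ico t 1)).toReal := by ring
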